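/- A graph admitting a 1-page rique layout is planar. -/

import Mathlib

variable {V : Type*}

/-- The order `f` avoids the rique forbidden pattern P.1. -/
def RiqueFree (G : SimpleGraph V) (f : V → ℕ) : Prop :=
  ∀ a a' b b' c c', G.Adj a a' → G.Adj b b' → G.Adj c c' →
    ¬ (f a < f b ∧ f b < f c ∧ f c < f b' ∧ f b' < f a' ∧ f b' < f c')

/-- `G` has rique-number 1: some linear vertex order avoids the pattern. -/
def HasOnePageRique (G : SimpleGraph V) : Prop :=
  ∃ f : V → ℕ, Function.Injective f ∧ RiqueFree G f

/-- `G` is planar: its vertices can be mapped injectively to the plane and its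
edges drawn as simple arcs meeting only at common endpoints. -/
def IsPlanar (G : SimpleGraph V) : Prop :=
  ∃ (p : V → ℝ × ℝ) (γ : ∀ u v : V, G.Adj u v → Path (p u) (p v)),
    Function.Injective p ∧
    (∀ u v (h : G.Adj u v), Function.Injective (γ u v h)) ∧
    (∀ u v (h : G.Adj u v) (w : V), p w ∈ Set.range (γ u v h) → w = u ∨ w = v) ∧
    (∀ u v u' v' (h : G.Adj u v) (h' : G.Adj u' v'), s(u, v) ≠ s(u', v') →
      Set.range (γ u v h) ∩ Set.range (γ u' v' h') ⊆
        ({p u, p v} : Set (ℝ × ℝ)) ∩ {p u', p v'})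

open Real Set

namespace OPRPlanar

noncomputable section

/-- upper (s=1) / lower (s=-1) semicircle over interval [a,b]. -/
def semiSet (a b s : ℝ) : Set (ℝ × ℝ) :=
  {q | q.2 ^ 2 = (q.1 - a) * (b - q.1) ∧ 0 ≤ s * q.2}

def arcFun (a b s : ℝ) (t : ℝ) : ℝ × ℝ :=
  ((a + b) / 2 - (b - a) / 2 * Real.cos (π * t), s * ((b - a) / 2) * Real.sin (π * t))

def arc (a b s : ℝ) : Path ((a, 0) : ℝ × ℝ) ((b, 0) : ℝ × ℝ) where
  toFun t := arcFun a b s t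
  continuous_toFun := by
    apply Continuous.prodMk <;> fun_prop
  source' := by
    show arcFun a b s ((0:ℝ)) = _
    simp only [arcFun, mul_zero, Real.cos_zero, Real.sin_zero, mul_one, Prod.mk.injEq]
    exact ⟨by ring, trivial⟩
  target' := by
    show arcFun a b s ((1:ℝ)) = _
    simp only [arcFun, mul_one, Real.cos_pi, Real.sin_pi, mul_zero, Prod.mk.injEq]
    exact ⟨by ring, trivial⟩

@[simp] lemma arc_apply (a b s : ℝ) (t : unitInterval) : arc a b s t = arcFun a b s t := rfl

lemma arc_inj {a b : ℝ} (hab : a < b) (s : ℝ) : Function.Injective ⇑(arc a b s) := by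
  intro t₁ t₂ hst
  have h1 : Real.cos (π * t₁) = Real.cos (π * t₂) := by
    have h := congrArg Prod.fst hst
    simp only [arc_apply, arcFun] at h
    have hba : (b - a) / 2 ≠ 0 := ne_of_gt (by linarith)
    have h' : (b - a) / 2 * (Real.cos (π * t₁) - Real.cos (π * t₂)) = 0 := by
      linear_combination (-1 : ℝ) * h
    have := (mul_eq_zero.mp h').resolve_left hba
    linarith
  have hmem : ∀ t : unitInterval, π * t ∈ Icc (0:ℝ) π := by
    intro t
    constructor
    · exact mul_nonneg Real.pi_nonneg t.2.1
    · nlinarith [t.2.2, Real.pi_pos]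
  have h2 := Real.injOn_cos (hmem t₁) (hmem t₂) h1
  have := mul_left_cancel₀ Real.pi_ne_zero h2
  exact Subtype.ext this

lemma arc_mem_semiSet {a b s : ℝ} (hab : a ≤ b) (hs : s = 1 ∨ s = -1) (t : unitInterval) :
    arc a b s t ∈ semiSet a b s := by
  have hsq : s ^ 2 = 1 := by rcases hs with rfl | rfl <;> norm_num
  have hsin : 0 ≤ Real.sin (π * t) := by
    apply Real.sin_nonneg_of_nonneg_of_le_pi
    · exact mul_nonneg Real.pi_nonneg t.2.1
    · nlinarith [t.2.2, Real.pi_pos]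
  have hpyth := Real.sin_sq_add_cos_sq (π * t)
  constructor
  · show (s * ((b - a) / 2) * Real.sin (π * t)) ^ 2 = _
    simp only [arc_apply, arcFun]
    linear_combination ((b - a) / 2) ^ 2 * Real.sin (π * t) ^ 2 * hsq + ((b - a) / 2) ^ 2 * hpyth
  · show (0:ℝ) ≤ s * (s * ((b - a) / 2) * Real.sin (π * t))
    have : s * (s * ((b - a) / 2) * Real.sin (π * t)) = s ^ 2 * (((b - a) / 2) * Real.sin (π * t)) := by
      ring
    rw [this, hsq, one_mul]
    have h2 : (0:ℝ) ≤ (b - a) / 2 := by linarith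
    exact mul_nonneg h2 hsin

lemma arc_range_subset {a b s : ℝ} (hab : a ≤ b) (hs : s = 1 ∨ s = -1) :
    Set.range ⇑(arc a b s) ⊆ semiSet a b s := by
  rintro q ⟨t, rfl⟩
  exact arc_mem_semiSet hab hs t

lemma mem_interval {x a b : ℝ} (hab : a ≤ b) (h : 0 ≤ (x - a) * (b - x)) :
    a ≤ x ∧ x ≤ b := by
  rcases le_or_gt a x with h1 | h1
  · refine ⟨h1, ?_⟩
    rcases le_or_gt x b with h2 | h2
    · exact h2
    · nlinarith
  · exfalso; nlinarith

/-- the key algebraic disjointness lemma for semicircles. -/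
lemma semiSet_inter {a b a' b' s s' : ℝ} (hab : a < b) (hab' : a' < b')
    (hs : s = 1 ∨ s = -1) (hs' : s' = 1 ∨ s' = -1)
    (hcomp : s = s' →
      (b ≤ a' ∨ b' ≤ a ∨ (a ≤ a' ∧ b' ≤ b) ∨ (a' ≤ a ∧ b ≤ b')) ∧ ¬(a = a' ∧ b = b')) :
    ∀ q ∈ semiSet a b s ∩ semiSet a' b' s',
      q.2 = 0 ∧ (q.1 = a ∨ q.1 = b) ∧ (q.1 = a' ∨ q.1 = b') := by
  rintro ⟨x, y⟩ ⟨⟨e1, s1⟩, ⟨e2, s2⟩⟩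
  simp only [semiSet, mem_setOf_eq] at e1 s1 e2 s2
  have hx1 : a ≤ x ∧ x ≤ b := mem_interval hab.le (by nlinarith [sq_nonneg y])
  have hx2 : a' ≤ x ∧ x ≤ b' := mem_interval hab'.le (by nlinarith [sq_nonneg y])
  by_cases hss : s = s'
  · obtain ⟨hc, hne⟩ := hcomp hss
    have hE : (x - a) * (b - x) = (x - a') * (b' - x) := by rw [← e1, ← e2]
    rcases hc with hcc | hcc | ⟨hc1, hc2⟩ | ⟨hc1, hc2⟩
    · -- disjoint, b ≤ a'
      have hxb : x = b := le_antisymm hx1.2 (le_trans hcc hx2.1)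
      have hxa' : x = a' := le_antisymm (by linarith [hx1.2]) hx2.1
      have hy : y = 0 := by
        have : y ^ 2 = 0 := by rw [e1, hxb]; ring
        exact (pow_eq_zero_iff two_ne_zero).mp this
      exact ⟨hy, Or.inr hxb, Or.inl hxa'⟩
    · -- disjoint, b' ≤ a
      have hxa : x = a := le_antisymm (by linarith [hx2.2]) hx1.1
      have hxb' : x = b' := le_antisymm hx2.2 (by linarith [hx1.1])
      have hy : y = 0 := by
        have : y ^ 2 = 0 := by rw [e2, hxb']; ring
        exact (pow_eq_zero_iff two_ne_zero).mp this
      exact ⟨hy, Or.inl hxa, Or.inr hxb'⟩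
    · -- nested : a ≤ a' ∧ b' ≤ b
      have key : (x - a) * (b - b') + (a' - a) * (b' - x) = 0 := by linear_combination hE
      have t1 : 0 ≤ (x - a) * (b - b') := mul_nonneg (by linarith [hx2.1]) (by linarith)
      have t2 : 0 ≤ (a' - a) * (b' - x) := mul_nonneg (by linarith) (by linarith [hx2.2])
      have z1 : (x - a) * (b - b') = 0 := by linarith
      have z2 : (a' - a) * (b' - x) = 0 := by linarith
      rcases eq_or_lt_of_le hc1 with heq | hlt
      · -- a = a'
        have hbne : b ≠ b' := fun hbb => hne ⟨heq, hbb⟩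
        have hbb : b' < b := lt_of_le_of_ne hc2 (Ne.symm hbne)
        have hxa : x = a := by
          rcases mul_eq_zero.mp z1 with h0 | h0
          · linarith
          · exfalso; linarith
        have hy : y = 0 := by
          have : y ^ 2 = 0 := by rw [e1, hxa]; ring
          exact (pow_eq_zero_iff two_ne_zero).mp this
        exact ⟨hy, Or.inl hxa, Or.inl (by rw [hxa, heq])⟩
      · -- a < a'
        have hxb' : x = b' := by
          rcases mul_eq_zero.mp z2 with h0 | h0
          · exfalso; linarith
          · linarith
        have hy : y = 0 := by
          have : y ^ 2 = 0 := by rw [e2, hxb']; ring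
          exact (pow_eq_zero_iff two_ne_zero).mp this
        rcases mul_eq_zero.mp z1 with h0 | h0
        · exfalso; linarith
        · exact ⟨hy, Or.inr (by linarith), Or.inr hxb'⟩
    · -- nested : a' ≤ a ∧ b ≤ b'
      have key : (x - a') * (b' - b) + (a - a') * (b - x) = 0 := by linear_combination -hE
      have t1 : 0 ≤ (x - a') * (b' - b) := mul_nonneg (by linarith [hx1.1]) (by linarith)
      have t2 : 0 ≤ (a - a') * (b - x) := mul_nonneg (by linarith) (by linarith [hx1.2])
      have z1 : (x - a') * (b' - b) = 0 := by linarith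
      have z2 : (a - a') * (b - x) = 0 := by linarith
      rcases eq_or_lt_of_le hc1 with heq | hlt
      · have hbne : b ≠ b' := fun hbb => hne ⟨heq.symm, hbb⟩
        have hbb : b < b' := lt_of_le_of_ne hc2 hbne
        have hxa' : x = a' := by
          rcases mul_eq_zero.mp z1 with h0 | h0
          · linarith
          · exfalso; linarith
        have hy : y = 0 := by
          have : y ^ 2 = 0 := by rw [e2, hxa']; ring
          exact (pow_eq_zero_iff two_ne_zero).mp this
        exact ⟨hy, Or.inl (by rw [hxa', ← heq]), Or.inl hxa'⟩
      · have hxb : x = b := by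
          rcases mul_eq_zero.mp z2 with h0 | h0
          · exfalso; linarith
          · linarith
        have hy : y = 0 := by
          have : y ^ 2 = 0 := by rw [e1, hxb]; ring
          exact (pow_eq_zero_iff two_ne_zero).mp this
        rcases mul_eq_zero.mp z1 with h0 | h0
        · exfalso; linarith
        · exact ⟨hy, Or.inr hxb, Or.inr (by linarith)⟩
  · -- opposite signs : y = 0
    have hy : y = 0 := by
      rcases hs with rfl | rfl <;> rcases hs' with rfl | rfl
      · exact absurd rfl hss
      · nlinarith
      · nlinarith
      · exact absurd rfl hss
    have h1 : x = a ∨ x = b := by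
      have : (x - a) * (b - x) = 0 := by rw [← e1, hy]; ring
      rcases mul_eq_zero.mp this with h0 | h0
      · left; linarith
      · right; linarith
    have h2 : x = a' ∨ x = b' := by
      have : (x - a') * (b' - x) = 0 := by rw [← e2, hy]; ring
      rcases mul_eq_zero.mp this with h0 | h0
      · left; linarith
      · right; linarith
    exact ⟨hy, h1, h2⟩

lemma symm_inj {X : Type*} [TopologicalSpace X] {x y : X} {γ : Path x y}
    (h : Function.Injective ⇑γ) : Function.Injective ⇑γ.symm := by
  intro s t hst
  have h2 : unitInterval.symm s = unitInterval.symm t := h hst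
  have := congrArg unitInterval.symm h2
  simpa using this

lemma trans_inj {X : Type*} [TopologicalSpace X] {x y z : X} {γ₁ : Path x y} {γ₂ : Path y z}
    (h₁ : Function.Injective ⇑γ₁) (h₂ : Function.Injective ⇑γ₂)
    (hm : ∀ p, p ∈ Set.range ⇑γ₁ → p ∈ Set.range ⇑γ₂ → p = y) :
    Function.Injective ⇑(γ₁.trans γ₂) := by
  intro s t hst
  rw [Path.trans_apply, Path.trans_apply] at hst
  split_ifs at hst with hs ht ht
  · have := h₁ hst
    have : (2 : ℝ) * s = 2 * t := by
      have := congrArg (fun r : unitInterval => (r : ℝ)) this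
      simpa using this
    ext
    linarith
  · exfalso
    have hy1 : γ₁ _ = y := hm _ ⟨_, rfl⟩ ⟨_, hst.symm⟩ 
    have hy2 : γ₂ _ = y := hst ▸ hy1
    have e1 : (⟨2 * s, _⟩ : unitInterval) = 1 := h₁ (by rw [hy1, Path.target])
    have e2 : (⟨2 * t - 1, _⟩ : unitInterval) = 0 := h₂ (by rw [hy2, Path.source])
    have f1 : (2 : ℝ) * s = 1 := by
      have := congrArg (fun r : unitInterval => (r : ℝ)) e1
      simpa using this
    have f2 : (2 : ℝ) * t - 1 = 0 := by
      have := congrArg (fun r : unitInterval => (r : ℝ)) e2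
      simpa using this
    have : (t : ℝ) ≤ 1 / 2 := by linarith
    exact ht this
  · exfalso
    have hy1 : γ₁ _ = y := hm _ ⟨_, rfl⟩ ⟨_, hst⟩ 
    have hy2 : γ₂ _ = y := hst.symm ▸ hy1
    have e1 : (⟨2 * t, _⟩ : unitInterval) = 1 := h₁ (by rw [hy1, Path.target])
    have e2 : (⟨2 * s - 1, _⟩ : unitInterval) = 0 := h₂ (by rw [hy2, Path.source])
    have f1 : (2 : ℝ) * t = 1 := by
      have := congrArg (fun r : unitInterval => (r : ℝ)) e1
      simpa using this
    have f2 : (2 : ℝ) * s - 1 = 0 := by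
      have := congrArg (fun r : unitInterval => (r : ℝ)) e2
      simpa using this
    have : (s : ℝ) ≤ 1 / 2 := by linarith
    exact hs this
  · have := h₂ hst
    have : (2 : ℝ) * s - 1 = 2 * t - 1 := by
      have := congrArg (fun r : unitInterval => (r : ℝ)) this
      simpa using this
    ext
    linarith

/-! ### positions -/

def lefty (a b : ℕ) : ℝ := -1 - (b : ℝ) - (a : ℝ) / ((b : ℝ) + 1)

def righty (a b : ℕ) : ℝ := (b : ℝ) - 1 + ((a : ℝ) + 1) / ((b : ℝ) + 1)

section Bounds

variable {a b a' b' : ℕ}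

lemma one_le_castb (hab : a < b) : (1 : ℝ) ≤ (b : ℝ) := by
  have : 1 ≤ b := by omega
  exact_mod_cast this

lemma cast_lt (hab : a < b) : (a : ℝ) < (b : ℝ) := by exact_mod_cast hab

lemma cast_add_one_le (hab : a < b) : (a : ℝ) + 1 ≤ (b : ℝ) := by
  have : a + 1 ≤ b := hab
  exact_mod_cast this

lemma div1_bounds (hab : a < b) :
    0 ≤ (a : ℝ) / ((b : ℝ) + 1) ∧ (a : ℝ) / ((b : ℝ) + 1) < 1 := by
  constructor
  · positivity
  · rw [div_lt_one (by positivity)]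
    have := cast_lt hab
    linarith

lemma div2_bounds (hab : a < b) :
    0 < ((a : ℝ) + 1) / ((b : ℝ) + 1) ∧ ((a : ℝ) + 1) / ((b : ℝ) + 1) < 1 := by
  constructor
  · positivity
  · rw [div_lt_one (by positivity)]
    have := cast_lt hab
    linarith

lemma lefty_le (hab : a < b) : lefty a b ≤ -1 - (b : ℝ) := by
  have := (div1_bounds hab).1; unfold lefty; linarith

lemma lefty_gt (hab : a < b) : -2 - (b : ℝ) < lefty a b := by
  have := (div1_bounds hab).2; unfold lefty; linarith

lemma lefty_neg (hab : a < b) : lefty a b < 0 := by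
  have h := lefty_le hab
  have := one_le_castb hab
  linarith

lemma righty_gt (hab : a < b) : (b : ℝ) - 1 < righty a b := by
  have := (div2_bounds hab).1; unfold righty; linarith

lemma righty_lt (hab : a < b) : righty a b < (b : ℝ) := by
  have := (div2_bounds hab).2; unfold righty; linarith

lemma righty_pos (hab : a < b) : 0 < righty a b := by
  have := righty_gt hab
  have := one_le_castb hab
  linarith

lemma lefty_lt_righty (hab : a < b) : lefty a b < righty a b :=
  lt_trans (lefty_neg hab) (righty_pos hab)

lemma lefty_lt_casta (hab : a < b) : lefty a b < (a : ℝ) :=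
  lt_of_lt_of_le (lefty_neg hab) (Nat.cast_nonneg a)

lemma nat_ne_lefty (hab : a < b) (n : ℕ) : (n : ℝ) ≠ lefty a b := by
  have h1 := lefty_neg hab
  have h2 : (0 : ℝ) ≤ n := Nat.cast_nonneg n
  intro h
  rw [← h] at h1
  linarith

lemma nat_ne_righty (hab : a < b) (n : ℕ) : (n : ℝ) ≠ righty a b := by
  intro h
  rcases le_or_gt b n with hn | hn
  · have : (b : ℝ) ≤ n := by exact_mod_cast hn
    have := righty_lt hab
    rw [← h] at this
    linarith
  · have : (n : ℝ) + 1 ≤ b := by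
      have : n + 1 ≤ b := hn
      exact_mod_cast this
    have := righty_gt hab
    rw [← h] at this
    linarith

lemma lex_mono (hab : a < b) (hab' : a' < b') (h : b < b' ∨ (b = b' ∧ a < a')) :
    lefty a' b' < lefty a b ∧ righty a b < righty a' b' := by
  rcases h with h | ⟨hbe, hlt⟩
  · have hbb : (b : ℝ) + 1 ≤ b' := cast_add_one_le h
    constructor
    · have h1 := lefty_le hab'
      have h2 := lefty_gt hab
      linarith
    · have h1 := righty_lt hab
      have h2 := righty_gt hab'
      linarith
  · subst hbe
    have hc : (a : ℝ) < a' := by exact_mod_cast hlt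
    constructor
    · unfold lefty
      have : (a : ℝ) / ((b : ℝ) + 1) < (a' : ℝ) / ((b : ℝ) + 1) := by gcongr <;> positivity
      linarith
    · unfold righty
      have : ((a : ℝ) + 1) / ((b : ℝ) + 1) < ((a' : ℝ) + 1) / ((b : ℝ) + 1) := by
        gcongr <;> positivity
      linarith

lemma lefty_ne (hab : a < b) (hab' : a' < b') (hne : ¬(a = a' ∧ b = b')) :
    lefty a b ≠ lefty a' b' := by
  have : (b < b' ∨ (b = b' ∧ a < a')) ∨ (b' < b ∨ (b' = b ∧ a' < a)) := by omega
  rcases this with h | h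
  · exact (ne_of_lt (lex_mono hab hab' h).1).symm
  · exact ne_of_lt (lex_mono hab' hab h).1

lemma righty_ne (hab : a < b) (hab' : a' < b') (hne : ¬(a = a' ∧ b = b')) :
    righty a b ≠ righty a' b' := by
  have : (b < b' ∨ (b = b' ∧ a < a')) ∨ (b' < b ∨ (b' = b ∧ a' < a)) := by omega
  rcases this with h | h
  · exact ne_of_lt (lex_mono hab hab' h).2
  · exact (ne_of_lt (lex_mono hab' hab h).2).symm

end Bounds

/-! ### the layout -/

section Layout

open scoped Classical

variable {V : Type*} (G : SimpleGraph V) (f : V → ℕ)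

/-- The (oriented, `a < b`) edge position pair `(a,b)` is (strictly) covered. -/
def Pcov (a b : ℕ) : Prop := ∃ x y, G.Adj x y ∧ f x < a ∧ b < f y

variable {G f}

lemma cov_not_cross (hR : RiqueFree G f) {u v u' v' : V} (h : G.Adj u v) (h' : G.Adj u' v')
    (hc : Pcov G f (f u) (f v)) : ¬(f u < f u' ∧ f u' < f v ∧ f v < f v') := by
  rintro ⟨h1, h2, h3⟩
  obtain ⟨x, y, hxy, hx, hy⟩ := hc
  exact hR x y u v u' v' hxy h h' ⟨hx, h1, h2, hy, h3⟩

lemma free_not_nested {u v u' v' : V} (h : G.Adj u v)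
    (hfree : ¬ Pcov G f (f u') (f v')) : ¬(f u < f u' ∧ f v' < f v) := by
  rintro ⟨h1, h2⟩
  exact hfree ⟨u, v, h, h1, h2⟩

lemma free_not_inside_cov (hR : RiqueFree G f) {u v b1 b2 : V} (huv : G.Adj u v)
    (hb : G.Adj b1 b2) (hcov : Pcov G f (f b1) (f b2)) (hfree : ¬ Pcov G f (f u) (f v))
    (hlt : f u < f v) : ¬(f b1 < f u ∧ f u < f b2) := by
  rintro ⟨h1, h2⟩
  obtain ⟨x, y, hxy, hx, hy⟩ := hcov
  rcases Nat.lt_trichotomy (f v) (f b2) with hv | hv | hv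
  · exact hfree ⟨b1, b2, hb, h1, hv⟩
  · exact hfree ⟨x, y, hxy, lt_trans hx h1, hv ▸ hy⟩
  · exact hR x y b1 b2 u v hxy hb huv ⟨hx, h1, h2, hy, hv⟩

variable (G f)

def edgeSet (a b : ℕ) : Set (ℝ × ℝ) :=
  if Pcov G f a b then semiSet (a : ℝ) (b : ℝ) (-1)
  else
    semiSet (lefty a b) (a : ℝ) (-1) ∪ semiSet (lefty a b) (righty a b) 1 ∪
      semiSet (righty a b) (b : ℝ) (-1)

noncomputable def edgePath (a b : ℕ) : Path (((a : ℝ), (0 : ℝ)) : ℝ × ℝ) ((b : ℝ), (0 : ℝ)) :=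
  if Pcov G f a b then arc (a : ℝ) (b : ℝ) (-1)
  else
    ((arc (lefty a b) (a : ℝ) (-1)).symm).trans
      ((arc (lefty a b) (righty a b) 1).trans (arc (righty a b) (b : ℝ) (-1)))

variable {G f} {a b : ℕ}

lemma semiSet_axis {c d s : ℝ} {q : ℝ × ℝ} (hq : q ∈ semiSet c d s) (hy : q.2 = 0) :
    q.1 = c ∨ q.1 = d := by
  obtain ⟨e1, _⟩ := hq
  have h0 : (q.1 - c) * (d - q.1) = 0 := by rw [← e1, hy]; ring
  rcases mul_eq_zero.mp h0 with h | h
  · left; linarith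
  · right; linarith

lemma edgePath_range (hab : a < b) :
    Set.range ⇑(edgePath G f a b) ⊆ edgeSet G f a b := by
  have hab' : (a : ℝ) < b := cast_lt hab
  unfold edgePath edgeSet
  split_ifs with hc
  · exact arc_range_subset hab'.le (Or.inr rfl)
  · rw [Path.trans_range, Path.symm_range, Path.trans_range]
    rintro q (hq | hq | hq)
    · exact Or.inl (Or.inl (arc_range_subset (lefty_lt_casta hab).le (Or.inr rfl) hq))
    · exact Or.inl (Or.inr (arc_range_subset (lefty_lt_righty hab).le (Or.inl rfl) hq))
    · exact Or.inr (arc_range_subset (righty_lt hab).le (Or.inr rfl) hq)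

lemma edgePath_inj (hab : a < b) : Function.Injective ⇑(edgePath G f a b) := by
  have hab' : (a : ℝ) < b := cast_lt hab
  have hL := lefty_lt_casta hab
  have hM := lefty_lt_righty hab
  have hN := righty_lt hab
  have hLneg := lefty_neg hab
  have hRpos := righty_pos hab
  have haR : (a : ℝ) ≠ righty a b := nat_ne_righty hab a
  have haR' : (a : ℝ) ≤ righty a b := by
    have h1 := cast_add_one_le hab
    have h2 := righty_gt hab
    linarith
  unfold edgePath
  split_ifs with hc
  · exact arc_inj hab' _
  · have hmeet23 : ∀ p, p ∈ Set.range ⇑(arc (lefty a b) (righty a b) 1) →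
        p ∈ Set.range ⇑(arc (righty a b) (b : ℝ) (-1)) → p = ((righty a b, 0) : ℝ × ℝ) := by
      intro p hp1 hp2
      obtain ⟨hy, h1, h2⟩ := semiSet_inter hM hN (Or.inl rfl) (Or.inr rfl)
        (fun h => absurd h (by norm_num)) p
        ⟨arc_range_subset hM.le (Or.inl rfl) hp1, arc_range_subset hN.le (Or.inr rfl) hp2⟩
      have hx : p.1 = righty a b := by
        rcases h1 with h1 | h1
        · rcases h2 with h2 | h2 <;> · exfalso; rw [h1] at h2; linarith
        · exact h1
      exact Prod.ext hx hy
    have hmeet1 : ∀ p, p ∈ Set.range ⇑(arc (lefty a b) (a : ℝ) (-1)).symm →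
        p ∈ Set.range ⇑((arc (lefty a b) (righty a b) 1).trans (arc (righty a b) (b : ℝ) (-1))) →
        p = ((lefty a b, 0) : ℝ × ℝ) := by
      intro p hp1 hp2
      rw [Path.symm_range] at hp1
      have hp1' := arc_range_subset hL.le (Or.inr rfl) hp1
      rw [Path.trans_range] at hp2
      rcases hp2 with hp2 | hp2
      · obtain ⟨hy, h1, h2⟩ := semiSet_inter hL hM (Or.inr rfl) (Or.inl rfl)
          (fun h => absurd h (by norm_num)) p
          ⟨hp1', arc_range_subset hM.le (Or.inl rfl) hp2⟩
        have hx : p.1 = lefty a b := by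
          rcases h1 with h1 | h1
          · exact h1
          · exfalso
            rcases h2 with h2 | h2
            · rw [h1] at h2
              have : (0 : ℝ) ≤ (a : ℝ) := Nat.cast_nonneg a
              linarith [h2 ▸ hLneg]
            · exact haR (h1 ▸ h2)
        exact Prod.ext hx hy
      · exfalso
        obtain ⟨hy, h1, h2⟩ := semiSet_inter hL hN (Or.inr rfl) (Or.inr rfl)
          (fun _ => ⟨Or.inl haR', fun hcon => (by linarith [hcon.1] : False)⟩) p
          ⟨hp1', arc_range_subset hN.le (Or.inr rfl) hp2⟩
        rcases h1 with h1 | h1 <;> rcases h2 with h2 | h2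
        · rw [h1] at h2; linarith
        · rw [h1] at h2
          have : (0 : ℝ) ≤ (b : ℝ) := Nat.cast_nonneg b
          linarith
        · exact haR (h1 ▸ h2)
        · rw [h1] at h2
          exact hab'.ne h2
    exact trans_inj (symm_inj (arc_inj hL _))
      (trans_inj (arc_inj hM _) (arc_inj hN _) hmeet23) hmeet1

lemma edgeSet_nat (hab : a < b) {n : ℕ} {q : ℝ × ℝ}
    (hq : q ∈ edgeSet G f a b) (hy : q.2 = 0) (hx : q.1 = (n : ℝ)) : n = a ∨ n = b := by
  have hcast : ∀ m : ℕ, q.1 = (m : ℝ) → n = m := by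
    intro m hm
    have : (n : ℝ) = m := by rw [← hx, hm]
    exact_mod_cast this
  unfold edgeSet at hq
  split_ifs at hq with hc
  · rcases semiSet_axis hq hy with h | h
    · exact Or.inl (hcast a h)
    · exact Or.inr (hcast b h)
  · rcases hq with (hq | hq) | hq
    · rcases semiSet_axis hq hy with h | h
      · exact absurd (hx ▸ h) (nat_ne_lefty hab n)
      · exact Or.inl (hcast a h)
    · rcases semiSet_axis hq hy with h | h
      · exact absurd (hx ▸ h) (nat_ne_lefty hab n)
      · exact absurd (hx ▸ h) (nat_ne_righty hab n)
    · rcases semiSet_axis hq hy with h | h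
      · exact absurd (hx ▸ h) (nat_ne_righty hab n)
      · exact Or.inr (hcast b h)

end Layout

section Master

open scoped Classical

variable {V : Type*} {G : SimpleGraph V} {f : V → ℕ}

/-- covered edge (u,v) against free edge (u',v'). -/
lemma mixed (hR : RiqueFree G f) {u v u' v' : V}
    (h : G.Adj u v) (h' : G.Adj u' v') (hab : f u < f v) (hab' : f u' < f v')
    (hc : Pcov G f (f u) (f v)) (hc' : ¬ Pcov G f (f u') (f v')) :
    semiSet ((f u : ℝ)) ((f v : ℝ)) (-1) ∩
      (semiSet (lefty (f u') (f v')) ((f u' : ℝ)) (-1) ∪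
        semiSet (lefty (f u') (f v')) (righty (f u') (f v')) 1 ∪
        semiSet (righty (f u') (f v')) ((f v' : ℝ)) (-1)) ⊆
      {q : ℝ × ℝ | q.2 = 0 ∧ (q.1 = (f u : ℝ) ∨ q.1 = (f v : ℝ)) ∧
        (q.1 = (f u' : ℝ) ∨ q.1 = (f v' : ℝ))} := by
  have hcab : (f u : ℝ) < f v := cast_lt hab
  have hcab' : (f u' : ℝ) < f v' := cast_lt hab'
  have hL' := lefty_lt_casta hab'
  have hM' := lefty_lt_righty hab'
  have hN' := righty_lt hab'
  have hLneg' := lefty_neg hab'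
  have hRpos' := righty_pos hab'
  have hRgt' := righty_gt hab'
  rintro q ⟨hq0, (hq1 | hq1) | hq1⟩
  · -- C vs A1'
    have k := free_not_inside_cov hR h' h hc hc' hab'
    have hdisj : (f v : ℝ) ≤ lefty (f u') (f v') ∨ (f u' : ℝ) ≤ (f u : ℝ) ∨
        ((f u : ℝ) ≤ lefty (f u') (f v') ∧ (f u' : ℝ) ≤ (f v : ℝ)) ∨
        (lefty (f u') (f v') ≤ (f u : ℝ) ∧ (f v : ℝ) ≤ (f u' : ℝ)) := by
      rcases le_or_gt (f u') (f u) with hcase | hcase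
      · exact Or.inr (Or.inl (by exact_mod_cast hcase))
      · have hvu : f v ≤ f u' := by
          by_contra hcon
          exact k ⟨hcase, by omega⟩
        refine Or.inr (Or.inr (Or.inr ⟨le_of_lt (lt_of_lt_of_le hLneg' (Nat.cast_nonneg _)), ?_⟩))
        exact_mod_cast hvu
    obtain ⟨hy, h1, h2⟩ := semiSet_inter hcab hL' (Or.inr rfl) (Or.inr rfl)
      (fun _ => ⟨hdisj, fun hcon => nat_ne_lefty hab' (f u) hcon.1⟩) q ⟨hq0, hq1⟩
    refine ⟨hy, h1, ?_⟩
    rcases h2 with h2 | h2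
    · exfalso
      rcases h1 with h1 | h1 <;> (rw [h1] at h2; exact nat_ne_lefty hab' _ h2)
    · exact Or.inl h2
  · -- C vs A2'
    exfalso
    obtain ⟨hy, h1, h2⟩ := semiSet_inter hcab hM' (Or.inr rfl) (Or.inl rfl)
      (fun hcon => absurd hcon (by norm_num)) q ⟨hq0, hq1⟩
    rcases h1 with h1 | h1 <;> rcases h2 with h2 | h2 <;> rw [h1] at h2
    · exact nat_ne_lefty hab' _ h2
    · exact nat_ne_righty hab' _ h2
    · exact nat_ne_lefty hab' _ h2
    · exact nat_ne_righty hab' _ h2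
  · -- C vs A3'
    have hdisj : (f v : ℝ) ≤ righty (f u') (f v') ∨ (f v' : ℝ) ≤ (f u : ℝ) ∨
        ((f u : ℝ) ≤ righty (f u') (f v') ∧ (f v' : ℝ) ≤ (f v : ℝ)) ∨
        (righty (f u') (f v') ≤ (f u : ℝ) ∧ (f v : ℝ) ≤ (f v' : ℝ)) := by
      rcases Nat.lt_trichotomy (f v) (f v') with hv | hv | hv
      · have : (f v : ℝ) + 1 ≤ f v' := cast_add_one_le hv
        exact Or.inl (by linarith)
      · have h1 : (f u : ℝ) + 1 ≤ f v := cast_add_one_le hab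
        have h2 : (f v : ℝ) = f v' := by exact_mod_cast hv
        exact Or.inr (Or.inr (Or.inl ⟨by linarith, by linarith⟩))
      · rcases le_or_gt (f v') (f u) with hcase | hcase
        · exact Or.inr (Or.inl (by exact_mod_cast hcase))
        · have h1 : (f u : ℝ) + 1 ≤ f v' := cast_add_one_le hcase
          have h2 : (f v' : ℝ) ≤ f v := by
            have : f v' ≤ f v := le_of_lt hv
            exact_mod_cast this
          exact Or.inr (Or.inr (Or.inl ⟨by linarith, h2⟩))
    obtain ⟨hy, h1, h2⟩ := semiSet_inter hcab hN' (Or.inr rfl) (Or.inr rfl)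
      (fun _ => ⟨hdisj, fun hcon => nat_ne_righty hab' (f u) hcon.1⟩) q ⟨hq0, hq1⟩
    refine ⟨hy, h1, ?_⟩
    rcases h2 with h2 | h2
    · exfalso
      rcases h1 with h1 | h1 <;> (rw [h1] at h2; exact nat_ne_righty hab' _ h2)
    · exact Or.inr h2

/-- two free edges. -/
lemma freefree {u v u' v' : V}
    (h : G.Adj u v) (h' : G.Adj u' v') (hab : f u < f v) (hab' : f u' < f v')
    (hc : ¬ Pcov G f (f u) (f v)) (hc' : ¬ Pcov G f (f u') (f v'))
    (hne : ¬(f u = f u' ∧ f v = f v')) :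
    (semiSet (lefty (f u) (f v)) ((f u : ℝ)) (-1) ∪
      semiSet (lefty (f u) (f v)) (righty (f u) (f v)) 1 ∪
      semiSet (righty (f u) (f v)) ((f v : ℝ)) (-1)) ∩
    (semiSet (lefty (f u') (f v')) ((f u' : ℝ)) (-1) ∪
      semiSet (lefty (f u') (f v')) (righty (f u') (f v')) 1 ∪
      semiSet (righty (f u') (f v')) ((f v' : ℝ)) (-1)) ⊆
      {q : ℝ × ℝ | q.2 = 0 ∧ (q.1 = (f u : ℝ) ∨ q.1 = (f v : ℝ)) ∧
        (q.1 = (f u' : ℝ) ∨ q.1 = (f v' : ℝ))} := by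
  have hcab : (f u : ℝ) < f v := cast_lt hab
  have hcab' : (f u' : ℝ) < f v' := cast_lt hab'
  have hL := lefty_lt_casta hab
  have hM := lefty_lt_righty hab
  have hN := righty_lt hab
  have hLneg := lefty_neg hab
  have hRpos := righty_pos hab
  have hRgt := righty_gt hab
  have hL' := lefty_lt_casta hab'
  have hM' := lefty_lt_righty hab'
  have hN' := righty_lt hab'
  have hLneg' := lefty_neg hab'
  have hRpos' := righty_pos hab'
  have hRgt' := righty_gt hab'
  have k1 := free_not_nested h hc'
  have k2 := free_not_nested h' hc
  have hlex : (f v < f v' ∨ (f v = f v' ∧ f u < f u')) ∨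
      (f v' < f v ∨ (f v' = f v ∧ f u' < f u)) := by omega
  have hlne := lefty_ne hab hab' hne
  have hrne := righty_ne hab hab' hne
  rintro q ⟨(hq1 | hq1) | hq1, (hq2 | hq2) | hq2⟩
  · -- A1 vs A1'
    have hdisj : (f u : ℝ) ≤ lefty (f u') (f v') ∨ (f u' : ℝ) ≤ lefty (f u) (f v) ∨
        (lefty (f u) (f v) ≤ lefty (f u') (f v') ∧ (f u' : ℝ) ≤ (f u : ℝ)) ∨
        (lefty (f u') (f v') ≤ lefty (f u) (f v) ∧ (f u : ℝ) ≤ (f u' : ℝ)) := by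
      rcases hlex with hx | hx
      · have hm := (lex_mono hab hab' hx).1
        have huu : f u ≤ f u' := by
          rcases hx with hx | hx
          · by_contra hcon; exact k2 ⟨by omega, hx⟩
          · omega
        exact Or.inr (Or.inr (Or.inr ⟨le_of_lt hm, by exact_mod_cast huu⟩))
      · have hm := (lex_mono hab' hab hx).1
        have huu : f u' ≤ f u := by
          rcases hx with hx | hx
          · by_contra hcon; exact k1 ⟨by omega, hx⟩
          · omega
        exact Or.inr (Or.inr (Or.inl ⟨le_of_lt hm, by exact_mod_cast huu⟩))
    obtain ⟨hy, h1, h2⟩ := semiSet_inter hL hL' (Or.inr rfl) (Or.inr rfl)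
      (fun _ => ⟨hdisj, fun hcon => hlne hcon.1⟩) q ⟨hq1, hq2⟩
    rcases h1 with h1 | h1 <;> rcases h2 with h2 | h2
    · exact absurd (h1 ▸ h2) hlne
    · exfalso; rw [h1] at h2; exact nat_ne_lefty hab _ h2.symm
    · exfalso; rw [h1] at h2; exact nat_ne_lefty hab' _ h2
    · exact ⟨hy, Or.inl h1, Or.inl h2⟩
  · -- A1 vs A2'
    exfalso
    obtain ⟨hy, h1, h2⟩ := semiSet_inter hL hM' (Or.inr rfl) (Or.inl rfl)
      (fun hcon => absurd hcon (by norm_num)) q ⟨hq1, hq2⟩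
    rcases h1 with h1 | h1 <;> rcases h2 with h2 | h2 <;> rw [h1] at h2
    · exact absurd h2 hlne
    · linarith [h2 ▸ hLneg]
    · exact nat_ne_lefty hab' _ h2
    · exact nat_ne_righty hab' _ h2
  · -- A1 vs A3'
    have hdisj : (f u : ℝ) ≤ righty (f u') (f v') ∨ (f v' : ℝ) ≤ lefty (f u) (f v) ∨
        (lefty (f u) (f v) ≤ righty (f u') (f v') ∧ (f v' : ℝ) ≤ (f u : ℝ)) ∨
        (righty (f u') (f v') ≤ lefty (f u) (f v) ∧ (f u : ℝ) ≤ (f v' : ℝ)) := by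
      rcases le_or_gt (f v') (f u) with hcase | hcase
      · exact Or.inr (Or.inr (Or.inl ⟨by linarith, by exact_mod_cast hcase⟩))
      · have := cast_add_one_le hcase
        exact Or.inl (by linarith)
    obtain ⟨hy, h1, h2⟩ := semiSet_inter hL hN' (Or.inr rfl) (Or.inr rfl)
      (fun _ => ⟨hdisj, fun hcon => by linarith [hcon.1]⟩) q ⟨hq1, hq2⟩
    rcases h1 with h1 | h1 <;> rcases h2 with h2 | h2
    · exfalso; rw [h1] at h2; linarith
    · exfalso; rw [h1] at h2; exact nat_ne_lefty hab _ h2.symm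
    · exfalso; rw [h1] at h2; exact nat_ne_righty hab' _ h2
    · exact ⟨hy, Or.inl h1, Or.inr h2⟩
  · -- A2 vs A1'
    exfalso
    obtain ⟨hy, h1, h2⟩ := semiSet_inter hM hL' (Or.inl rfl) (Or.inr rfl)
      (fun hcon => absurd hcon (by norm_num)) q ⟨hq1, hq2⟩
    rcases h1 with h1 | h1 <;> rcases h2 with h2 | h2 <;> rw [h1] at h2
    · exact absurd h2 hlne
    · exact nat_ne_lefty hab _ h2.symm
    · linarith [h2 ▸ hLneg']
    · exact nat_ne_righty hab _ h2.symm
  · -- A2 vs A2'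
    exfalso
    have hdisj : righty (f u) (f v) ≤ lefty (f u') (f v') ∨
        righty (f u') (f v') ≤ lefty (f u) (f v) ∨
        (lefty (f u) (f v) ≤ lefty (f u') (f v') ∧ righty (f u') (f v') ≤ righty (f u) (f v)) ∨
        (lefty (f u') (f v') ≤ lefty (f u) (f v) ∧ righty (f u) (f v) ≤ righty (f u') (f v')) := by
      rcases hlex with hx | hx
      · obtain ⟨hm1, hm2⟩ := lex_mono hab hab' hx
        exact Or.inr (Or.inr (Or.inr ⟨le_of_lt hm1, le_of_lt hm2⟩))
      · obtain ⟨hm1, hm2⟩ := lex_mono hab' hab hx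
        exact Or.inr (Or.inr (Or.inl ⟨le_of_lt hm1, le_of_lt hm2⟩))
    obtain ⟨hy, h1, h2⟩ := semiSet_inter hM hM' (Or.inl rfl) (Or.inl rfl)
      (fun _ => ⟨hdisj, fun hcon => hlne hcon.1⟩) q ⟨hq1, hq2⟩
    rcases h1 with h1 | h1 <;> rcases h2 with h2 | h2 <;> rw [h1] at h2
    · exact absurd h2 hlne
    · linarith [h2 ▸ hLneg]
    · linarith [h2 ▸ hLneg']
    · exact absurd h2 hrne
  · -- A2 vs A3'
    exfalso
    obtain ⟨hy, h1, h2⟩ := semiSet_inter hM hN' (Or.inl rfl) (Or.inr rfl)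
      (fun hcon => absurd hcon (by norm_num)) q ⟨hq1, hq2⟩
    rcases h1 with h1 | h1 <;> rcases h2 with h2 | h2 <;> rw [h1] at h2
    · linarith [h2 ▸ hLneg]
    · exact nat_ne_lefty hab _ h2.symm
    · exact absurd h2 hrne
    · exact nat_ne_righty hab _ h2.symm
  · -- A3 vs A1'
    have hdisj : (f v : ℝ) ≤ lefty (f u') (f v') ∨ (f u' : ℝ) ≤ righty (f u) (f v) ∨
        (righty (f u) (f v) ≤ lefty (f u') (f v') ∧ (f u' : ℝ) ≤ (f v : ℝ)) ∨
        (lefty (f u') (f v') ≤ righty (f u) (f v) ∧ (f v : ℝ) ≤ (f u' : ℝ)) := by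
      rcases le_or_gt (f v) (f u') with hcase | hcase
      · exact Or.inr (Or.inr (Or.inr ⟨by linarith, by exact_mod_cast hcase⟩))
      · have := cast_add_one_le hcase
        exact Or.inr (Or.inl (by linarith))
    obtain ⟨hy, h1, h2⟩ := semiSet_inter hN hL' (Or.inr rfl) (Or.inr rfl)
      (fun _ => ⟨hdisj, fun hcon => by linarith [hcon.1]⟩) q ⟨hq1, hq2⟩
    rcases h1 with h1 | h1 <;> rcases h2 with h2 | h2
    · exfalso; rw [h1] at h2; linarith
    · exfalso; rw [h1] at h2; exact nat_ne_righty hab _ h2.symm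
    · exfalso; rw [h1] at h2; exact nat_ne_lefty hab' _ h2
    · exact ⟨hy, Or.inr h1, Or.inl h2⟩
  · -- A3 vs A2'
    exfalso
    obtain ⟨hy, h1, h2⟩ := semiSet_inter hN hM' (Or.inr rfl) (Or.inl rfl)
      (fun hcon => absurd hcon (by norm_num)) q ⟨hq1, hq2⟩
    rcases h1 with h1 | h1 <;> rcases h2 with h2 | h2 <;> rw [h1] at h2
    · linarith [h2 ▸ hLneg']
    · exact absurd h2 hrne
    · exact nat_ne_lefty hab' _ h2
    · exact nat_ne_righty hab' _ h2
  · -- A3 vs A3'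
    have hdisj : (f v : ℝ) ≤ righty (f u') (f v') ∨ (f v' : ℝ) ≤ righty (f u) (f v) ∨
        (righty (f u) (f v) ≤ righty (f u') (f v') ∧ (f v' : ℝ) ≤ (f v : ℝ)) ∨
        (righty (f u') (f v') ≤ righty (f u) (f v) ∧ (f v : ℝ) ≤ (f v' : ℝ)) := by
      rcases Nat.lt_trichotomy (f v) (f v') with hv | hv | hv
      · have := cast_add_one_le hv
        exact Or.inl (by linarith)
      · have hveq : (f v : ℝ) = f v' := by exact_mod_cast hv
        have hune : f u ≠ f u' := fun hcon => hne ⟨hcon, hv⟩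
        rcases Nat.lt_trichotomy (f u) (f u') with hu | hu | hu
        · have hm := (lex_mono hab hab' (Or.inr ⟨hv, hu⟩)).2
          exact Or.inr (Or.inr (Or.inl ⟨le_of_lt hm, le_of_eq hveq.symm⟩))
        · exact absurd hu hune
        · have hm := (lex_mono hab' hab (Or.inr ⟨hv.symm, hu⟩)).2
          exact Or.inr (Or.inr (Or.inr ⟨le_of_lt hm, le_of_eq hveq⟩))
      · have := cast_add_one_le hv
        exact Or.inr (Or.inl (by linarith))
    obtain ⟨hy, h1, h2⟩ := semiSet_inter hN hN' (Or.inr rfl) (Or.inr rfl)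
      (fun _ => ⟨hdisj, fun hcon => hrne hcon.1⟩) q ⟨hq1, hq2⟩
    rcases h1 with h1 | h1 <;> rcases h2 with h2 | h2
    · exact absurd (h1 ▸ h2) hrne
    · exfalso; rw [h1] at h2; exact nat_ne_righty hab _ h2.symm
    · exfalso; rw [h1] at h2; exact nat_ne_righty hab' _ h2
    · exact ⟨hy, Or.inr h1, Or.inr h2⟩

lemma master (hf : Function.Injective f) (hR : RiqueFree G f) {u v u' v' : V}
    (h : G.Adj u v) (h' : G.Adj u' v') (hab : f u < f v) (hab' : f u' < f v')
    (hne : ¬(f u = f u' ∧ f v = f v')) :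
    edgeSet G f (f u) (f v) ∩ edgeSet G f (f u') (f v') ⊆
      {q : ℝ × ℝ | q.2 = 0 ∧ (q.1 = (f u : ℝ) ∨ q.1 = (f v : ℝ)) ∧
        (q.1 = (f u' : ℝ) ∨ q.1 = (f v' : ℝ))} := by
  intro q hq
  unfold edgeSet at hq
  by_cases hc : Pcov G f (f u) (f v) <;> by_cases hc' : Pcov G f (f u') (f v')
  · rw [if_pos hc, if_pos hc'] at hq
    have k1 := cov_not_cross hR h h' hc
    have k2 := cov_not_cross hR h' h hc'
    have hdisjn : f v ≤ f u' ∨ f v' ≤ f u ∨ (f u ≤ f u' ∧ f v' ≤ f v) ∨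
        (f u' ≤ f u ∧ f v ≤ f v') := by omega
    have hdisj : (f v : ℝ) ≤ f u' ∨ (f v' : ℝ) ≤ f u ∨
        ((f u : ℝ) ≤ f u' ∧ (f v' : ℝ) ≤ f v) ∨ ((f u' : ℝ) ≤ f u ∧ (f v : ℝ) ≤ f v') := by
      rcases hdisjn with hx | hx | ⟨hx1, hx2⟩ | ⟨hx1, hx2⟩
      · exact Or.inl (by exact_mod_cast hx)
      · exact Or.inr (Or.inl (by exact_mod_cast hx))
      · exact Or.inr (Or.inr (Or.inl ⟨by exact_mod_cast hx1, by exact_mod_cast hx2⟩))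
      · exact Or.inr (Or.inr (Or.inr ⟨by exact_mod_cast hx1, by exact_mod_cast hx2⟩))
    exact semiSet_inter (cast_lt hab) (cast_lt hab') (Or.inr rfl) (Or.inr rfl)
      (fun _ => ⟨hdisj, fun hcon => hne ⟨by exact_mod_cast hcon.1, by exact_mod_cast hcon.2⟩⟩)
      q hq
  · rw [if_pos hc, if_neg hc'] at hq
    exact mixed hR h h' hab hab' hc hc' hq
  · rw [if_neg hc, if_pos hc'] at hq
    obtain ⟨hy, h1, h2⟩ := mixed hR h' h hab' hab hc' hc ⟨hq.2, hq.1⟩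
    exact ⟨hy, h2, h1⟩
  · rw [if_neg hc, if_neg hc'] at hq
    exact freefree h h' hab hab' hc hc' hne hq

end Master

end

end OPRPlanar

/-- A graph admitting a 1-page rique layout is planar. -/
theorem onePageRique_planar (G : SimpleGraph V) (h : HasOnePageRique G) :
    IsPlanar G := by
  classical
  obtain ⟨f, hf, hR⟩ := h
  have hlt : ∀ {u v : V}, G.Adj u v → ¬ f u < f v → f v < f u := by
    intro u v huv hn
    rcases Nat.lt_trichotomy (f u) (f v) with hx | hx | hx
    · exact absurd hx hn
    · exact absurd (hf hx) (G.ne_of_adj huv)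
    · exact hx
  have fin : ∀ (x y : ℝ) (c d : V), y = 0 → (x = (f c : ℝ) ∨ x = (f d : ℝ)) →
      ((x, y) : ℝ × ℝ) ∈ ({((f c : ℝ), (0 : ℝ)), ((f d : ℝ), (0 : ℝ))} : Set (ℝ × ℝ)) := by
    rintro x y c d rfl (rfl | rfl)
    · exact Set.mem_insert _ _
    · exact Set.mem_insert_of_mem _ rfl
  refine ⟨fun v => ((f v : ℝ), 0),
    fun u v huv => if hl : f u < f v then OPRPlanar.edgePath G f (f u) (f v)
      else (OPRPlanar.edgePath G f (f v) (f u)).symm, ?_, ?_, ?_, ?_⟩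
  · intro u v huv
    have h1 : (f u : ℝ) = f v := congrArg Prod.fst huv
    exact hf (by exact_mod_cast h1)
  · intro u v huv
    dsimp only
    split_ifs with hl
    · exact OPRPlanar.edgePath_inj hl
    · exact OPRPlanar.symm_inj (OPRPlanar.edgePath_inj (hlt huv hl))
  · intro u v huv w hw
    dsimp only at hw
    split_ifs at hw with hl
    · have hq := OPRPlanar.edgePath_range hl hw
      rcases OPRPlanar.edgeSet_nat hl hq rfl rfl with he | he
      · exact Or.inl (hf he)
      · exact Or.inr (hf he)
    · rw [Path.symm_range] at hw
      have hq := OPRPlanar.edgePath_range (hlt huv hl) hw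
      rcases OPRPlanar.edgeSet_nat (hlt huv hl) hq rfl rfl with he | he
      · exact Or.inr (hf he)
      · exact Or.inl (hf he)
  · intro u v u' v' huv hu'v' hs q hq
    obtain ⟨hq1, hq2⟩ := hq
    dsimp only at hq1 hq2
    obtain ⟨x, y⟩ := q
    split_ifs at hq1 with hl
    · split_ifs at hq2 with hl'
      · obtain ⟨hy, h1, h2⟩ := OPRPlanar.master hf hR huv hu'v' hl hl'
          (fun hcon => hs (by rw [hf hcon.1, hf hcon.2]))
          ⟨OPRPlanar.edgePath_range hl hq1, OPRPlanar.edgePath_range hl' hq2⟩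
        exact ⟨fin x y u v hy h1, fin x y u' v' hy h2⟩
      · rw [Path.symm_range] at hq2
        have hl'' := hlt hu'v' hl'
        obtain ⟨hy, h1, h2⟩ := OPRPlanar.master hf hR huv hu'v'.symm hl hl''
          (fun hcon => hs (by rw [hf hcon.1, hf hcon.2, Sym2.eq_swap]))
          ⟨OPRPlanar.edgePath_range hl hq1, OPRPlanar.edgePath_range hl'' hq2⟩
        exact ⟨fin x y u v hy h1, fin x y u' v' hy h2.symm⟩
    · rw [Path.symm_range] at hq1
      have hl2 := hlt huv hl
      split_ifs at hq2 with hl'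
      · obtain ⟨hy, h1, h2⟩ := OPRPlanar.master hf hR huv.symm hu'v' hl2 hl'
          (fun hcon => hs (by rw [hf hcon.1, hf hcon.2, Sym2.eq_swap]))
          ⟨OPRPlanar.edgePath_range hl2 hq1, OPRPlanar.edgePath_range hl' hq2⟩
        exact ⟨fin x y u v hy h1.symm, fin x y u' v' hy h2⟩
      · rw [Path.symm_range] at hq2
        have hl'' := hlt hu'v' hl'
        obtain ⟨hy, h1, h2⟩ := OPRPlanar.master hf hR huv.symm hu'v'.symm hl2 hl''
          (fun hcon => hs (by rw [hf hcon.1, hf hcon.2]))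
          ⟨OPRPlanar.edgePath_range hl2 hq1, OPRPlanar.edgePath_range hl'' hq2⟩
        exact ⟨fin x y u v hy h1.symm, fin x y u' v' hy h2.symm⟩
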